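/- Let (X,d,δ) be a dilatation structure and let Δ^x(u,v) = lim_{ε→0} δ^{δ^x_ε u}_{ε⁻¹}(δ^x_ε v) be the limit from axiom A4. Then the tangent distance d^x is left invariant with respect to the induced local group operation: for any x ∈ X and any u, v, w sufficiently close to x, d^x( Δ^x(u,v), Δ^x(u,w) ) = d^x(v,w), i.e. for each u the map v ↦ Δ^x(u,v) preserves the distance d^x. -/

import Mathlib

/-- A dilatation structure `(X, d, δ)` on a locally compact metric space `X`, following
Buliga.  It consists of a constant `A > 1`, open neighbourhoods `U x ⊇ B̄(x,A)`, dilatations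
`δ x ε : U x → X` for `ε ∈ (0,1]` with inverses `δinv x ε`, satisfying axioms A0–A4, together
with the tangent distances `dx x` provided by axiom A3 and the limit operation `Δ` provided
by axiom A4. -/
structure DilatationStructure (X : Type*) [MetricSpace X] [LocallyCompactSpace X] where
  /-- The constant `A > 1`. -/
  A : ℝ
  one_lt_A : 1 < A
  /-- The domain `U x` of the dilatations based at `x`. -/
  U : X → Set X
  U_open : ∀ x, IsOpen (U x)
  closedBall_subset_U : ∀ x, Metric.closedBall x A ⊆ U x
  /-- The dilatation `δ x ε` based at `x` of coefficient `ε`. -/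
  δ : X → ℝ → X → X
  /-- The inverse dilatation `δinv x ε = δ^x_{ε⁻¹}`. -/
  δinv : X → ℝ → X → X
  -- A0
  ball_subset_image : ∀ x, ∀ ε ∈ Set.Ioc (0:ℝ) 1,
    Metric.ball x ε ⊆ δ x ε '' Metric.ball x A
  image_subset_U : ∀ x, ∀ ε ∈ Set.Ioc (0:ℝ) 1, δ x ε '' Metric.ball x A ⊆ U x
  δinv_δ : ∀ x, ∀ ε ∈ Set.Ioc (0:ℝ) 1, ∀ u ∈ U x, δinv x ε (δ x ε u) = u
  -- A1
  δ_fixes_basepoint : ∀ x, ∀ ε ∈ Set.Ioc (0:ℝ) 1, δ x ε x = x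
  δ_one : ∀ x y, δ x 1 y = y
  δ_continuous : Continuous fun p : ℝ × X × X => δ p.2.1 p.1 p.2.2
  δ_tendsto_basepoint : ∀ K : Set X, IsCompact K → ∀ η > 0, ∃ ε₀ > 0,
    ∀ x ∈ K, ∀ y ∈ Metric.closedBall x A, ∀ ε ∈ Set.Ioo (0:ℝ) ε₀, dist (δ x ε y) x ≤ η
  -- A2
  δ_comp : ∀ x, ∀ ε ∈ Set.Ioc (0:ℝ) 1, ∀ μ ∈ Set.Ioc (0:ℝ) 1, ∀ u ∈ Metric.closedBall x A,
    δ x ε (δ x μ u) = δ x (ε * μ) u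
  -- A3: the tangent distance `dx x`, a non-degenerate distance on `B̄(x,A)`
  dx : X → X → X → ℝ
  dx_self : ∀ x, ∀ u ∈ Metric.closedBall x A, dx x u u = 0
  dx_symm : ∀ x, ∀ u ∈ Metric.closedBall x A, ∀ v ∈ Metric.closedBall x A,
    dx x u v = dx x v u
  dx_triangle : ∀ x, ∀ u ∈ Metric.closedBall x A, ∀ v ∈ Metric.closedBall x A,
    ∀ w ∈ Metric.closedBall x A, dx x u w ≤ dx x u v + dx x v w
  dx_nondegenerate : ∀ x, ∀ u ∈ Metric.closedBall x A, ∀ v ∈ Metric.closedBall x A,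
    dx x u v = 0 → u = v
  /-- Axiom A3: `(1/ε) d(δ^x_ε u, δ^x_ε v) → dx x u v` as `ε → 0⁺`, uniformly in
  `u, v ∈ B̄(x,A)` and in `x` in compact sets. -/
  A3 : ∀ K : Set X, IsCompact K → ∀ η > 0, ∃ ε₀ > 0, ∀ x ∈ K, ∀ ε ∈ Set.Ioo (0:ℝ) ε₀,
    ∀ u ∈ Metric.closedBall x A, ∀ v ∈ Metric.closedBall x A,
      |(1 / ε) * dist (δ x ε u) (δ x ε v) - dx x u v| ≤ η
  /-- The limit operation `Δ x u v = lim_{ε→0} δ^{δ^x_ε u}_{ε⁻¹}(δ^x_ε v)` from axiom A4. -/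
  Δ : X → X → X → X
  /-- Axiom A4: `δ^{δ^x_ε u}_{ε⁻¹}(δ^x_ε v) → Δ x u v` as `ε → 0⁺`, uniformly with respect
  to `x, u, v` in compact sets. -/
  A4 : ∀ K : Set X, IsCompact K → ∀ η > 0, ∃ ε₀ > 0, ∀ x ∈ K, ∀ ε ∈ Set.Ioo (0:ℝ) ε₀,
    ∀ u ∈ Metric.closedBall x 1, ∀ v ∈ Metric.closedBall x 1,
      dist (δinv (δ x ε u) ε (δ x ε v)) (Δ x u v) ≤ η

set_option maxHeartbeats 2000000 in
/-- Left invariance of the tangent distance with respect to the induced local group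
operation: for a dilatation structure `(X,d,δ)` and any `x`, for `u, v, w` sufficiently
close to `x`, `dx x (Δ x u v) (Δ x u w) = dx x v w`; i.e. for each `u` the map
`v ↦ Δ x u v` preserves the tangent distance `dx x`. -/
theorem dilatation_structure_dx_left_invariant {X : Type*} [MetricSpace X]
    [LocallyCompactSpace X] (DS : DilatationStructure X) (x : X) :
    ∃ r > 0, ∀ u v w : X, dist x u ≤ r → dist x v ≤ r → dist x w ≤ r →
      DS.dx x (DS.Δ x u v) (DS.Δ x u w) = DS.dx x v w := by
  obtain ⟨K, hKc, hKn⟩ := exists_compact_mem_nhds x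
  obtain ⟨ρ, hρ0, hρK⟩ := Metric.mem_nhds_iff.mp hKn
  set rK : ℝ := min (ρ/2) 1 with hrKdef
  have hrK0 : 0 < rK := lt_min (by linarith) one_pos
  have hrK1 : rK ≤ 1 := min_le_right _ _
  have hrKsub : Metric.closedBall x rK ⊆ K := by
    intro y hy
    apply hρK
    rw [Metric.mem_closedBall] at hy
    rw [Metric.mem_ball]
    have : rK ≤ ρ/2 := min_le_left _ _
    linarith
  have hxK : x ∈ K := hrKsub (Metric.mem_closedBall.2 (by simp [hrK0.le]))
  have hA1 : (1:ℝ) < DS.A := DS.one_lt_A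
  -- the modulus t₁ from A1 (uniform convergence to the basepoint) at scale rK/4
  obtain ⟨t₁, ht₁0, ht₁⟩ := DS.δ_tendsto_basepoint K hKc (rK/4) (by positivity)
  set s : ℝ := min t₁ 1 / 2 with hsdef
  have hmin0 : 0 < min t₁ 1 := lt_min ht₁0 one_pos
  have hs0 : 0 < s := by positivity
  have hst₁ : s < t₁ := lt_of_lt_of_le (half_lt_self hmin0) (min_le_left _ _)
  have hs1 : s ≤ 1/2 := by
    have : min t₁ 1 ≤ 1 := min_le_right _ _
    rw [hsdef]; linarith
  -- the modulus t₂ from A3 at accuracy s/4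
  obtain ⟨t₂, ht₂0, ht₂⟩ := DS.A3 K hKc (s/4) (by positivity)
  set ε₁ : ℝ := min t₂ 1 / 2 with hε₁def
  have hmin2 : 0 < min t₂ 1 := lt_min ht₂0 one_pos
  have hε₁0 : 0 < ε₁ := by positivity
  have hε₁t₂ : ε₁ < t₂ := lt_of_lt_of_le (half_lt_self hmin2) (min_le_left _ _)
  have hε₁1 : ε₁ ≤ 1 := by
    have : min t₂ 1 ≤ 1 := min_le_right _ _
    rw [hε₁def]; linarith
  -- continuity of δ x ε₁ at x gives the radius r
  have hc1 : Continuous fun y : X => DS.δ x ε₁ y :=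
    DS.δ_continuous.comp (continuous_const.prodMk (continuous_const.prodMk continuous_id))
  have hc1x : DS.δ x ε₁ x = x := DS.δ_fixes_basepoint x ε₁ ⟨hε₁0, hε₁1⟩
  obtain ⟨r', hr'0, hr'⟩ := Metric.continuousAt_iff.mp hc1.continuousAt (ε₁*s/8) (by positivity)
  set r : ℝ := min (r'/2) (rK/4) with hrdef
  have hr0 : 0 < r := lt_min (by linarith) (by positivity)
  have hrr' : r < r' := lt_of_le_of_lt (min_le_left _ _) (by linarith)
  have hrrK : r ≤ rK/4 := min_le_right _ _
  have hr1 : r ≤ 1 := by linarith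
  -- membership helpers
  have memA : ∀ z : X, dist x z ≤ r → z ∈ Metric.closedBall x DS.A := by
    intro z hz
    rw [Metric.mem_closedBall, dist_comm]
    linarith
  have mem1 : ∀ z : X, dist x z ≤ r → z ∈ Metric.closedBall x 1 := by
    intro z hz
    rw [Metric.mem_closedBall, dist_comm]
    linarith
  -- smallness of the tangent distance on the ball of radius r
  have hdx : ∀ u v : X, dist x u ≤ r → dist x v ≤ r → DS.dx x u v ≤ s/2 := by
    intro u v hu hv
    have h3 := ht₂ x hxK ε₁ ⟨hε₁0, hε₁t₂⟩ u (memA u hu) v (memA v hv)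
    have hd1 : dist (DS.δ x ε₁ u) x < ε₁*s/8 := by
      have h := hr' (show dist u x < r' by rw [dist_comm]; linarith)
      rwa [hc1x] at h
    have hd2 : dist (DS.δ x ε₁ v) x < ε₁*s/8 := by
      have h := hr' (show dist v x < r' by rw [dist_comm]; linarith)
      rwa [hc1x] at h
    have hdd : dist (DS.δ x ε₁ u) (DS.δ x ε₁ v) ≤ ε₁*s/4 := by
      calc dist (DS.δ x ε₁ u) (DS.δ x ε₁ v)
          ≤ dist (DS.δ x ε₁ u) x + dist (DS.δ x ε₁ v) x := dist_triangle_right _ _ _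
        _ ≤ ε₁*s/4 := by linarith
    have habs := (abs_le.mp h3).1
    have h4 : (1/ε₁) * dist (DS.δ x ε₁ u) (DS.δ x ε₁ v) ≤ (1/ε₁) * (ε₁*s/4) := by
      apply mul_le_mul_of_nonneg_left hdd (by positivity)
    have h5 : (1/ε₁) * (ε₁*s/4) = s/4 := by field_simp
    linarith
  refine ⟨r, hr0, ?_⟩
  intro u v w hu hv hw
  -- key construction: a right inverse point for δinv
  have key : ∀ v' : X, dist x v' ≤ r → ∀ ε : ℝ, 0 < ε → ε ≤ 1 → ε < t₁ → ε < t₂ →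
      ∃ a : X, DS.δ (DS.δ x ε u) ε a = DS.δ x ε v' ∧
        DS.δinv (DS.δ x ε u) ε (DS.δ x ε v') = a ∧
        dist a (DS.δ x ε u) ≤ rK/4 := by
    intro v' hv' ε hε0 hε1 hεt₁ hεt₂
    set y := DS.δ x ε u with hy
    have hyx : dist y x ≤ rK/4 := ht₁ x hxK u (memA u hu) ε ⟨hε0, hεt₁⟩
    have hyK : y ∈ K := hrKsub (Metric.mem_closedBall.2 (by linarith))
    have h3 := ht₂ x hxK ε ⟨hε0, hεt₂⟩ u (memA u hu) v' (memA v' hv')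
    have hduv : DS.dx x u v' ≤ s/2 := hdx u v' hu hv'
    have hdist : dist (DS.δ x ε v') y < s*ε := by
      have habs := (abs_le.mp h3).2
      have h1 : (1/ε) * dist (DS.δ x ε u) (DS.δ x ε v') ≤ 3*s/4 := by linarith
      have h2 : dist (DS.δ x ε u) (DS.δ x ε v') ≤ ε * (3*s/4) := by
        have := mul_le_mul_of_nonneg_left h1 hε0.le
        calc dist (DS.δ x ε u) (DS.δ x ε v')
            = ε * ((1/ε) * dist (DS.δ x ε u) (DS.δ x ε v')) := by field_simp
          _ ≤ ε * (3*s/4) := this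
      rw [dist_comm]
      calc dist (DS.δ x ε u) (DS.δ x ε v') ≤ ε * (3*s/4) := h2
        _ < s*ε := by nlinarith
    have hsε : s*ε ∈ Set.Ioc (0:ℝ) 1 := ⟨by positivity, by nlinarith⟩
    obtain ⟨q, hq, hqz⟩ := DS.ball_subset_image y (s*ε) hsε (Metric.mem_ball.2 hdist)
    have hqA : q ∈ Metric.closedBall y DS.A := Metric.ball_subset_closedBall hq
    have hcomp : DS.δ y ε (DS.δ y s q) = DS.δ x ε v' := by
      rw [DS.δ_comp y ε ⟨hε0, hε1⟩ s ⟨hs0, by linarith⟩ q hqA, mul_comm, hqz]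
    have hpU : DS.δ y s q ∈ DS.U y :=
      DS.image_subset_U y s ⟨hs0, by linarith⟩ ⟨q, hq, rfl⟩
    have hpy : dist (DS.δ y s q) y ≤ rK/4 := ht₁ y hyK q hqA s ⟨hs0, hst₁⟩
    refine ⟨DS.δ y s q, hcomp, ?_, hpy⟩
    rw [← hcomp, DS.δinv_δ y ε ⟨hε0, hε1⟩ _ hpU]
  -- main estimate: the difference is at most 5η for every η > 0
  have main : ∀ η : ℝ, 0 < η →
      |DS.dx x (DS.Δ x u v) (DS.Δ x u w) - DS.dx x v w| ≤ 5*η := by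
    intro η hη
    obtain ⟨t₅, ht₅0, ht₅⟩ := DS.A3 K hKc η hη
    set μ : ℝ := min t₅ 1 / 2 with hμdef
    have hmin5 : 0 < min t₅ 1 := lt_min ht₅0 one_pos
    have hμ0 : 0 < μ := by positivity
    have hμt₅ : μ < t₅ := lt_of_lt_of_le (half_lt_self hmin5) (min_le_left _ _)
    have hμ1 : μ ≤ 1 := by
      have : min t₅ 1 ≤ 1 := min_le_right _ _
      rw [hμdef]; linarith
    -- uniform continuity of (y,a) ↦ δ y μ a on K × K
    have hg : Continuous fun p : X × X => DS.δ p.1 μ p.2 :=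
      DS.δ_continuous.comp (continuous_const.prodMk (continuous_fst.prodMk continuous_snd))
    have hUC := (hKc.prod hKc).uniformContinuousOn_of_continuous hg.continuousOn
    obtain ⟨θ, hθ0, hθ⟩ := Metric.uniformContinuousOn_iff.mp hUC (μ*η/2) (by positivity)
    obtain ⟨t₃, ht₃0, ht₃⟩ := DS.δ_tendsto_basepoint K hKc (θ/2) (by positivity)
    obtain ⟨t₄, ht₄0, ht₄⟩ :=
      DS.A4 {x} isCompact_singleton (min (θ/2) (rK/4)) (lt_min (by positivity) (by positivity))
    -- choose ε
    set M : ℝ := min (min t₁ t₂) (min (min t₅ t₃) (min t₄ 1)) with hMdef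
    have hM0 : 0 < M :=
      lt_min (lt_min ht₁0 ht₂0) (lt_min (lt_min ht₅0 ht₃0) (lt_min ht₄0 one_pos))
    set ε : ℝ := M/2 with hεdef
    have hε0 : 0 < ε := by positivity
    have hεM : ε < M := half_lt_self hM0
    have hεt₁ : ε < t₁ := lt_of_lt_of_le hεM ((min_le_left _ _).trans (min_le_left _ _))
    have hεt₂ : ε < t₂ := lt_of_lt_of_le hεM ((min_le_left _ _).trans (min_le_right _ _))
    have hεt₅ : ε < t₅ :=
      lt_of_lt_of_le hεM ((min_le_right _ _).trans ((min_le_left _ _).trans (min_le_left _ _)))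
    have hεt₃ : ε < t₃ :=
      lt_of_lt_of_le hεM ((min_le_right _ _).trans ((min_le_left _ _).trans (min_le_right _ _)))
    have hεt₄ : ε < t₄ :=
      lt_of_lt_of_le hεM ((min_le_right _ _).trans ((min_le_right _ _).trans (min_le_left _ _)))
    have hε1 : ε ≤ 1 := le_of_lt (lt_of_lt_of_le hεM
      ((min_le_right _ _).trans ((min_le_right _ _).trans (min_le_right _ _))))
    obtain ⟨a, haδ, hainv, hay⟩ := key v hv ε hε0 hε1 hεt₁ hεt₂
    obtain ⟨b, hbδ, hbinv, hby⟩ := key w hw ε hε0 hε1 hεt₁ hεt₂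
    set y := DS.δ x ε u with hy
    have hyx : dist y x ≤ rK/4 := ht₁ x hxK u (memA u hu) ε ⟨hε0, hεt₁⟩
    have hyx2 : dist y x ≤ θ/2 := ht₃ x hxK u (memA u hu) ε ⟨hε0, hεt₃⟩
    have hyK : y ∈ K := hrKsub (Metric.mem_closedBall.2 (by linarith))
    -- A4 estimates
    have haΔ : dist a (DS.Δ x u v) ≤ min (θ/2) (rK/4) := by
      have h := ht₄ x rfl ε ⟨hε0, hεt₄⟩ u (mem1 u hu) v (mem1 v hv)
      rwa [hainv] at h
    have hbΔ : dist b (DS.Δ x u w) ≤ min (θ/2) (rK/4) := by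
      have h := ht₄ x rfl ε ⟨hε0, hεt₄⟩ u (mem1 u hu) w (mem1 w hw)
      rwa [hbinv] at h
    have haΔθ : dist a (DS.Δ x u v) ≤ θ/2 := haΔ.trans (min_le_left _ _)
    have haΔr : dist a (DS.Δ x u v) ≤ rK/4 := haΔ.trans (min_le_right _ _)
    have hbΔθ : dist b (DS.Δ x u w) ≤ θ/2 := hbΔ.trans (min_le_left _ _)
    have hbΔr : dist b (DS.Δ x u w) ≤ rK/4 := hbΔ.trans (min_le_right _ _)
    -- memberships
    have hax : dist a x ≤ rK/2 := by
      calc dist a x ≤ dist a y + dist y x := dist_triangle _ _ _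
        _ ≤ rK/2 := by linarith
    have hbx : dist b x ≤ rK/2 := by
      calc dist b x ≤ dist b y + dist y x := dist_triangle _ _ _
        _ ≤ rK/2 := by linarith
    have haK : a ∈ K := hrKsub (Metric.mem_closedBall.2 (by linarith))
    have hbK : b ∈ K := hrKsub (Metric.mem_closedBall.2 (by linarith))
    have hΔvx : dist (DS.Δ x u v) x ≤ rK := by
      calc dist (DS.Δ x u v) x ≤ dist (DS.Δ x u v) a + dist a x := dist_triangle _ _ _
        _ ≤ rK := by rw [dist_comm (DS.Δ x u v) a]; linarith
    have hΔwx : dist (DS.Δ x u w) x ≤ rK := by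
      calc dist (DS.Δ x u w) x ≤ dist (DS.Δ x u w) b + dist b x := dist_triangle _ _ _
        _ ≤ rK := by rw [dist_comm (DS.Δ x u w) b]; linarith
    have hΔvK : DS.Δ x u v ∈ K := hrKsub (Metric.mem_closedBall.2 hΔvx)
    have hΔvA : DS.Δ x u v ∈ Metric.closedBall x DS.A :=
      Metric.mem_closedBall.2 (by linarith)
    have hΔwA : DS.Δ x u w ∈ Metric.closedBall x DS.A :=
      Metric.mem_closedBall.2 (by linarith)
    have hayA : a ∈ Metric.closedBall y DS.A := Metric.mem_closedBall.2 (by linarith)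
    have hbyA : b ∈ Metric.closedBall y DS.A := Metric.mem_closedBall.2 (by linarith)
    -- the five estimates
    have E1 := ht₅ x hxK μ ⟨hμ0, hμt₅⟩ (DS.Δ x u v) hΔvA (DS.Δ x u w) hΔwA
    have E3 := ht₅ y hyK μ ⟨hμ0, hμt₅⟩ a hayA b hbyA
    have E4 := ht₅ y hyK ε ⟨hε0, hεt₅⟩ a hayA b hbyA
    rw [haδ, hbδ] at E4
    have E5 := ht₅ x hxK ε ⟨hε0, hεt₅⟩ v (memA v hv) w (memA w hw)
    have hd1 : dist (DS.δ x μ (DS.Δ x u v)) (DS.δ y μ a) < μ*η/2 := by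
      have h := hθ (x, DS.Δ x u v) ⟨hxK, hΔvK⟩ (y, a) ⟨hyK, haK⟩ ?_
      · exact h
      · rw [Prod.dist_eq]
        apply max_lt
        · rw [dist_comm]; linarith
        · rw [dist_comm]; linarith
    have hd2 : dist (DS.δ x μ (DS.Δ x u w)) (DS.δ y μ b) < μ*η/2 := by
      have h := hθ (x, DS.Δ x u w) ⟨hxK, hrKsub (Metric.mem_closedBall.2 hΔwx)⟩
        (y, b) ⟨hyK, hbK⟩ ?_
      · exact h
      · rw [Prod.dist_eq]
        apply max_lt
        · rw [dist_comm]; linarith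
        · rw [dist_comm]; linarith
    have E2 : |(1/μ) * dist (DS.δ x μ (DS.Δ x u v)) (DS.δ x μ (DS.Δ x u w)) -
        (1/μ) * dist (DS.δ y μ a) (DS.δ y μ b)| ≤ η := by
      rw [← mul_sub, abs_mul, abs_of_pos (by positivity : (0:ℝ) < 1/μ)]
      have hdd := dist_dist_dist_le (DS.δ x μ (DS.Δ x u v)) (DS.δ x μ (DS.Δ x u w))
        (DS.δ y μ a) (DS.δ y μ b)
      rw [Real.dist_eq] at hdd
      calc (1/μ) * |dist (DS.δ x μ (DS.Δ x u v)) (DS.δ x μ (DS.Δ x u w)) -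
            dist (DS.δ y μ a) (DS.δ y μ b)|
          ≤ (1/μ) * (μ*η/2 + μ*η/2) := by
            apply mul_le_mul_of_nonneg_left _ (by positivity)
            linarith
        _ = η := by field_simp; norm_num
    -- assemble
    set A' := DS.dx x (DS.Δ x u v) (DS.Δ x u w) with hA'
    set B' := (1/μ) * dist (DS.δ x μ (DS.Δ x u v)) (DS.δ x μ (DS.Δ x u w)) with hB'
    set C' := (1/μ) * dist (DS.δ y μ a) (DS.δ y μ b) with hC'
    set D' := DS.dx y a b with hD'
    set E' := (1/ε) * dist (DS.δ x ε v) (DS.δ x ε w) with hE'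
    set F' := DS.dx x v w with hF'
    have t2 : |A' - D'| ≤ |A' - C'| + |C' - D'| := abs_sub_le _ _ _
    have t3 : |A' - E'| ≤ |A' - D'| + |D' - E'| := abs_sub_le _ _ _
    have t4 : |A' - F'| ≤ |A' - E'| + |E' - F'| := abs_sub_le _ _ _
    have e1 : |A' - B'| ≤ η := by rw [abs_sub_comm]; exact E1
    have e3 : |C' - D'| ≤ η := E3
    have e4 : |D' - E'| ≤ η := by rw [abs_sub_comm]; exact E4
    have e5 : |E' - F'| ≤ η := E5
    have t1' : |A' - C'| ≤ |A' - B'| + |B' - C'| := abs_sub_le _ _ _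
    linarith [t1', t2, t3, t4, e1, E2, e3, e4, e5]
  -- conclude
  have h0 : DS.dx x (DS.Δ x u v) (DS.Δ x u w) - DS.dx x v w = 0 := by
    by_contra h
    have h1 : 0 < |DS.dx x (DS.Δ x u v) (DS.Δ x u w) - DS.dx x v w| := abs_pos.2 h
    have h2 := main (|DS.dx x (DS.Δ x u v) (DS.Δ x u w) - DS.dx x v w| / 10) (by positivity)
    linarith
  linarith [h0]
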